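/- Let λ > 1 and set μ = (λ³ − 1)/(4λ). Then the function U(z) = log(λ + μ|z|²) on ℂ is a supersolution of Wang's equation: ΔU(z) ≤ 4e^{U(z)} − 4e^{−2U(z)} for all z ∈ ℂ, where Δ = 4∂_z∂_{z̄} is the Euclidean Laplacian. -/

import Mathlib

/-- The Euclidean Laplacian Δ = ∂²/∂x² + ∂²/∂y² of a function on ℂ ≅ ℝ²,
expressed via iterated directional derivatives in the directions 1 and I. -/
noncomputable def laplacian (f : ℂ → ℝ) (z : ℂ) : ℝ :=
  fderiv ℝ (fun w => fderiv ℝ f w 1) z 1 +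
  fderiv ℝ (fun w => fderiv ℝ f w Complex.I) z Complex.I

open Complex

lemma hasD_aux (lam mu : ℝ) (w : ℂ) :
    HasFDerivAt (fun w : ℂ => lam + mu * normSq w)
      ((mu * (2 * w.re)) • (reCLM : ℂ →L[ℝ] ℝ) + (mu * (2 * w.im)) • (imCLM : ℂ →L[ℝ] ℝ)) w := by
  have hre : HasFDerivAt (fun w : ℂ => w.re) (reCLM : ℂ →L[ℝ] ℝ) w := reCLM.hasFDerivAt
  have him : HasFDerivAt (fun w : ℂ => w.im) (imCLM : ℂ →L[ℝ] ℝ) w := imCLM.hasFDerivAt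
  have h := (((hre.mul hre).add (him.mul him)).const_mul mu).const_add lam
  have h2 : HasFDerivAt (fun w : ℂ => lam + mu * normSq w)
      (mu • (w.re • (reCLM : ℂ →L[ℝ] ℝ) + w.re • reCLM + (w.im • (imCLM : ℂ →L[ℝ] ℝ) + w.im • imCLM))) w := by
    simpa only [← normSq_apply, Pi.mul_apply, Pi.add_apply] using h
  refine h2.congr_fderiv ?_
  ext v
  simp [ContinuousLinearMap.smul_apply]
  ring

lemma hasF_aux (lam mu : ℝ) (hD : ∀ w : ℂ, lam + mu * normSq w ≠ 0) (w : ℂ) :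
    HasFDerivAt (fun w : ℂ => Real.log (lam + mu * normSq w))
      ((lam + mu * normSq w)⁻¹ •
        ((mu * (2 * w.re)) • (reCLM : ℂ →L[ℝ] ℝ) + (mu * (2 * w.im)) • (imCLM : ℂ →L[ℝ] ℝ))) w :=
  (hasD_aux lam mu w).log (hD w)

lemma fderiv1 (lam mu : ℝ) (hD : ∀ w : ℂ, lam + mu * normSq w ≠ 0) (w : ℂ) :
    fderiv ℝ (fun w : ℂ => Real.log (lam + mu * normSq w)) w 1
      = mu * (2 * w.re) * (lam + mu * normSq w)⁻¹ := by
  rw [(hasF_aux lam mu hD w).fderiv]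
  simp [ContinuousLinearMap.smul_apply]
  ring

lemma fderivI (lam mu : ℝ) (hD : ∀ w : ℂ, lam + mu * normSq w ≠ 0) (w : ℂ) :
    fderiv ℝ (fun w : ℂ => Real.log (lam + mu * normSq w)) w Complex.I
      = mu * (2 * w.im) * (lam + mu * normSq w)⁻¹ := by
  rw [(hasF_aux lam mu hD w).fderiv]
  simp [ContinuousLinearMap.smul_apply]
  ring

lemma lap_eq (lam mu : ℝ) (hD : ∀ w : ℂ, 0 < lam + mu * normSq w) (z : ℂ) :
    laplacian (fun w => Real.log (lam + mu * ‖w‖ ^ 2)) z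
      = 4 * mu * lam / (lam + mu * normSq z) ^ 2 := by
  have hD' : ∀ w : ℂ, lam + mu * normSq w ≠ 0 := fun w => (hD w).ne'
  have hfn : (fun w : ℂ => Real.log (lam + mu * ‖w‖ ^ 2))
      = fun w : ℂ => Real.log (lam + mu * normSq w) := by
    funext w; rw [Complex.sq_norm]
  rw [hfn]
  unfold laplacian
  have hre : HasFDerivAt (fun w : ℂ => w.re) (reCLM : ℂ →L[ℝ] ℝ) z := reCLM.hasFDerivAt
  have him : HasFDerivAt (fun w : ℂ => w.im) (imCLM : ℂ →L[ℝ] ℝ) z := imCLM.hasFDerivAt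
  have hDz := hasD_aux lam mu z
  have hinv := (hasDerivAt_inv (hD' z)).comp_hasFDerivAt z hDz
  simp only [Function.comp_def] at hinv
  have hg1 : (fun w : ℂ => fderiv ℝ (fun w : ℂ => Real.log (lam + mu * normSq w)) w 1)
      = fun w : ℂ => mu * (2 * w.re) * (lam + mu * normSq w)⁻¹ := by
    funext w; exact fderiv1 lam mu hD' w
  have hgI : (fun w : ℂ => fderiv ℝ (fun w : ℂ => Real.log (lam + mu * normSq w)) w Complex.I)
      = fun w : ℂ => mu * (2 * w.im) * (lam + mu * normSq w)⁻¹ := by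
    funext w; exact fderivI lam mu hD' w
  rw [hg1, hgI]
  have hnum1 : HasFDerivAt (fun w : ℂ => mu * (2 * w.re)) ((mu * 2) • (reCLM : ℂ →L[ℝ] ℝ)) z := by
    have h := (hre.const_mul 2).const_mul mu
    refine h.congr_fderiv ?_
    ext v; simp [ContinuousLinearMap.smul_apply]; ring
  have hnumI : HasFDerivAt (fun w : ℂ => mu * (2 * w.im)) ((mu * 2) • (imCLM : ℂ →L[ℝ] ℝ)) z := by
    have h := (him.const_mul 2).const_mul mu
    refine h.congr_fderiv ?_
    ext v; simp [ContinuousLinearMap.smul_apply]; ring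
  have h1 : fderiv ℝ (fun w : ℂ => mu * (2 * w.re) * (lam + mu * normSq w)⁻¹) z = _ :=
    (hnum1.mul hinv).fderiv
  have hI : fderiv ℝ (fun w : ℂ => mu * (2 * w.im) * (lam + mu * normSq w)⁻¹) z = _ :=
    (hnumI.mul hinv).fderiv
  rw [h1, hI]
  simp only [ContinuousLinearMap.add_apply, ContinuousLinearMap.smul_apply,
    ContinuousLinearMap.coe_smul', Pi.smul_apply,
    reCLM_apply, imCLM_apply, Complex.one_re, Complex.one_im,
    Complex.I_re, Complex.I_im, smul_eq_mul]
  have hz := hD' z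
  field_simp
  ring_nf
  rw [normSq_apply]
  ring

theorem stmt_2 (lam : ℝ) (hlam : 1 < lam) (mu : ℝ) (hmu : mu = (lam ^ 3 - 1) / (4 * lam)) :
    ∀ z : ℂ,
      laplacian (fun w => Real.log (lam + mu * ‖w‖ ^ 2)) z ≤
        4 * Real.exp (Real.log (lam + mu * ‖z‖ ^ 2)) -
          4 * Real.exp (-2 * Real.log (lam + mu * ‖z‖ ^ 2)) := by
  intro z
  have hlam0 : (0:ℝ) < lam := lt_trans one_pos hlam
  have hmu0 : 0 < mu := by
    rw [hmu]
    apply div_pos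
    · have h3 : 1 < lam ^ 3 := one_lt_pow₀ hlam (by norm_num)
      linarith
    · linarith
  have hD : ∀ w : ℂ, 0 < lam + mu * normSq w := fun w => by
    have := normSq_nonneg w
    nlinarith
  rw [lap_eq lam mu hD z]
  rw [Complex.sq_norm]
  set D := lam + mu * normSq z with hDdef
  have hDpos : 0 < D := hD z
  have hDlam : lam ≤ D := by
    have := normSq_nonneg z
    nlinarith
  rw [Real.exp_log hDpos]
  have he2 : Real.exp (-2 * Real.log D) = (D ^ 2)⁻¹ := by
    rw [show -2 * Real.log D = Real.log ((D ^ 2)⁻¹) by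
      rw [Real.log_inv, Real.log_pow]; push_cast; ring,
      Real.exp_log (by positivity)]
  rw [he2]
  rw [div_le_iff₀ (by positivity : (0:ℝ) < D ^ 2)]
  have hmul : 4 * mu * lam = lam ^ 3 - 1 := by
    rw [hmu]; field_simp
  have hD3 : lam ^ 3 ≤ D ^ 3 := pow_le_pow_left₀ hlam0.le hDlam 3
  have hDne : D ≠ 0 := hDpos.ne'
  have hexp : (4 * D - 4 * (D ^ 2)⁻¹) * D ^ 2 = 4 * D ^ 3 - 4 := by
    field_simp
  rw [hexp, hmul]
  nlinarith
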